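/- Let N ≥ 4 with N ≡ 4 (mod 8), and let 1 ≤ k ≤ N/2. Then, as an identity in ℚ, C(N,k) = [∏_{i=0}^{k−2} (2^{N−2i−2} − 2^{N/2−i−1} − 2)/(2^{i+1} − 1)] · [1/2^{k−1} + (2^{N−2k} − 2^{N/2−k} − 2)/(2^k − 1)], where the product over an empty index range (k = 1) equals 1. -/

import Mathlib

attribute [local instance] Classical.propDecidable

/-- `C(N,k)`: the number of doubly-even `(N,k)` codes, i.e. `k`-dimensional
`𝔽₂`-subspaces of `𝔽₂^N` all of whose elements have Hamming weight divisible by `4`. -/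
noncomputable def doublyEvenCount (N k : ℕ) : ℕ :=
  Nat.card {C : Submodule (ZMod 2) (Fin N → ZMod 2) //
    Module.finrank (ZMod 2) C = k ∧ ∀ v ∈ C, 4 ∣ hammingNorm v}

open Finset Module
namespace Gaborit

variable {N : ℕ}

abbrev Vn (N : ℕ) := Fin N → ZMod 2
noncomputable instance : Fintype (Submodule (ZMod 2) (Vn N)) := Fintype.ofFinite _

def dp (v w : Vn N) : ZMod 2 := ∑ i, v i * w i

noncomputable def sgn (x : ZMod 2) : ℂ := (-1 : ℂ) ^ x.val

lemma zmod2_cases (x : ZMod 2) : x = 0 ∨ x = 1 := by revert x; decide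

@[simp] lemma sgn_zero : sgn 0 = 1 := rfl
@[simp] lemma sgn_one : sgn 1 = -1 := by simp [sgn, ZMod.val_one]

lemma sgn_add (a b : ZMod 2) : sgn (a + b) = sgn a * sgn b := by
  rcases zmod2_cases a with h | h <;> rcases zmod2_cases b with h' | h' <;>
    subst h <;> subst h' <;> simp [sgn, ZMod.val_one, show ((1:ZMod 2)+1) = 0 by decide]

lemma sgn_sum {ι : Type*} (s : Finset ι) (f : ι → ZMod 2) :
    sgn (∑ i ∈ s, f i) = ∏ i ∈ s, sgn (f i) := by
  induction s using Finset.cons_induction with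
  | empty => simp
  | cons a s ha ih => rw [Finset.sum_cons, Finset.prod_cons, sgn_add, ih]

lemma val_eq_ite (x : ZMod 2) : x.val = if x ≠ 0 then 1 else 0 := by revert x; decide

lemma wt_eq_sum (v : Vn N) : hammingNorm v = ∑ i, (v i).val := by
  simp only [hammingNorm, val_eq_ite]
  rw [Finset.card_filter]

lemma wt_le (v : Vn N) : hammingNorm v ≤ N := by
  simpa using hammingNorm_le_card_fintype (x := v)

lemma wt_filter (w : Vn N) : (univ.filter fun i => w i ≠ 0).card = hammingNorm w := rfl

lemma wt_filter_not (w : Vn N) :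
    (univ.filter fun i => ¬ w i ≠ 0).card = N - hammingNorm w := by
  have h := Finset.card_filter_add_card_filter_not (s := (univ : Finset (Fin N)))
    (p := fun i => w i ≠ 0)
  rw [wt_filter] at h
  simp only [Finset.card_univ, Fintype.card_fin] at h
  omega

lemma charSum (c : ℂ) (w : Vn N) :
    ∑ v : Vn N, c ^ (hammingNorm v) * sgn (dp v w)
      = (1 + c) ^ (N - hammingNorm w) * (1 - c) ^ (hammingNorm w) := by
  have h1 : ∀ v : Vn N, c ^ (hammingNorm v) * sgn (dp v w)
      = ∏ i, (c ^ (v i).val * sgn (v i * w i)) := by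
    intro v
    rw [wt_eq_sum, dp, sgn_sum, ← Finset.prod_pow_eq_pow_sum, Finset.prod_mul_distrib]
  simp only [h1]
  rw [← Fintype.prod_sum fun i (x : ZMod 2) => c ^ x.val * sgn (x * w i)]
  have h2 : ∀ i, (∑ x : ZMod 2, c ^ x.val * sgn (x * w i))
      = if w i ≠ 0 then 1 - c else 1 + c := by
    intro i
    have huniv : (∑ x : ZMod 2, c ^ x.val * sgn (x * w i))
        = c ^ (0 : ZMod 2).val * sgn (0 * w i) + c ^ (1 : ZMod 2).val * sgn (1 * w i) := by
      have hu : (Finset.univ : Finset (ZMod 2)) = {0, 1} := by decide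
      rw [hu, Finset.sum_insert (by decide), Finset.sum_singleton]
    rw [huniv]
    rcases zmod2_cases (w i) with h | h <;> rw [h] <;>
      simp [sgn, ZMod.val_one] <;> ring
  simp only [h2]
  rw [Finset.prod_ite (fun _ => (1-c)) (fun _ => (1+c)), Finset.prod_const, Finset.prod_const,
    wt_filter, wt_filter_not]
  ring


attribute [local instance] Classical.propDecidable

def allOnes (N : ℕ) : Vn N := fun _ => 1

lemma wt_allOnes : hammingNorm (allOnes N) = N := by
  simp [hammingNorm, allOnes, Finset.filter_true_of_mem]

lemma wt_eq_N_iff (w : Vn N) : hammingNorm w = N ↔ w = allOnes N := by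
  constructor
  · intro h
    funext i
    have hsub : (univ.filter fun i => w i ≠ 0) = univ := by
      apply Finset.eq_univ_of_card
      simpa [wt_filter] using h
    have : w i ≠ 0 := by
      have := Finset.mem_filter.mp (hsub ▸ Finset.mem_univ i)
      exact this.2
    rcases zmod2_cases (w i) with h' | h' <;> simp [h', allOnes] at this ⊢
  · rintro rfl; exact wt_allOnes

variable (W : Submodule (ZMod 2) (Vn N))

noncomputable def Wfin : Finset (Vn N) := univ.filter (· ∈ W)

lemma mem_Wfin {v : Vn N} : v ∈ Wfin W ↔ v ∈ W := by simp [Wfin]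

lemma card_Wfin : (Wfin W).card = 2 ^ finrank (ZMod 2) W := by
  have h1 : Fintype.card ↥W = (Wfin W).card := by
    rw [Wfin]; exact Fintype.card_subtype _
  have h2 : Fintype.card ↥W = Fintype.card (ZMod 2) ^ finrank (ZMod 2) ↥W :=
    card_eq_pow_finrank
  rw [ZMod.card] at h2
  omega

lemma dp_add_right (v w w' : Vn N) : dp v (w + w') = dp v w + dp v w' := by
  simp [dp, mul_add, Finset.sum_add_distrib]

lemma sum_sgn_dp (v : Vn N) :
    ∑ w ∈ Wfin W, sgn (dp v w)
      = if (∀ w ∈ W, dp v w = 0) then ((2:ℂ)) ^ (finrank (ZMod 2) W) else 0 := by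
  split_ifs with h
  · rw [Finset.sum_congr rfl (fun w hw => by rw [h w ((mem_Wfin W).mp hw), sgn_zero]),
      Finset.sum_const, card_Wfin]
    simp
  · push_neg at h
    obtain ⟨w0, hw0W, hw0⟩ := h
    have hdp : dp v w0 = 1 := (zmod2_cases _).resolve_left hw0
    have hself : ∀ u : Vn N, u + u = 0 := by
      intro u; funext i
      simp [CharTwo.add_self_eq_zero]
    have key : ∑ w ∈ Wfin W, sgn (dp v w) = ∑ w ∈ Wfin W, sgn (dp v (w + w0)) := by
      refine (Finset.sum_equiv (Equiv.addRight w0) (fun a => ?_) (fun a _ => rfl)).symm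
      constructor
      · intro ha; rw [mem_Wfin] at *; exact W.add_mem ha hw0W
      · intro ha; rw [mem_Wfin] at *
        have : a + w0 + w0 ∈ W := W.add_mem ha hw0W
        rwa [add_assoc, hself, add_zero] at this
    have key2 : ∑ w ∈ Wfin W, sgn (dp v (w + w0)) = - ∑ w ∈ Wfin W, sgn (dp v w) := by
      rw [← Finset.sum_neg_distrib]
      refine Finset.sum_congr rfl fun w _ => ?_
      rw [dp_add_right, sgn_add, hdp, sgn_one]; ring
    have := key.trans key2
    linear_combination this / 2

noncomputable def perp : Finset (Vn N) := univ.filter (fun v => ∀ w ∈ W, dp v w = 0)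

lemma perp_sum (c : ℂ) :
    (2:ℂ) ^ (finrank (ZMod 2) W) * ∑ v ∈ perp W, c ^ (hammingNorm v)
      = ∑ w ∈ Wfin W, (1 + c) ^ (N - hammingNorm w) * (1 - c) ^ (hammingNorm w) := by
  have : ∀ w ∈ Wfin W, (1 + c) ^ (N - hammingNorm w) * (1 - c) ^ (hammingNorm w)
      = ∑ v : Vn N, c ^ (hammingNorm v) * sgn (dp v w) := fun w _ => (charSum c w).symm
  rw [Finset.sum_congr rfl this, Finset.sum_comm]
  rw [Finset.sum_congr rfl (fun v (_ : v ∈ univ) => by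
    rw [← Finset.mul_sum, sum_sgn_dp W v])]
  simp only [mul_ite, mul_zero]
  rw [← Finset.sum_filter, perp, Finset.mul_sum]
  exact Finset.sum_congr rfl fun v _ => mul_comm _ _

open Complex

lemma quad (n : ℕ) : (1:ℂ) + I^n + (-1:ℂ)^n + (-I)^n = if 4 ∣ n then 4 else 0 := by
  have hI : I ^ n = I ^ (n % 4) := by
    conv_lhs => rw [← Nat.div_add_mod n 4, pow_add, pow_mul, Complex.I_pow_four, one_pow, one_mul]
  have hneg1 : (-1:ℂ) ^ n = (-1:ℂ) ^ (n % 4) := by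
    conv_lhs => rw [← Nat.div_add_mod n 4, pow_add, pow_mul]
    norm_num
  have hnegI : (-I) ^ n = (-I) ^ (n % 4) := by
    have h4 : (-I)^4 = 1 := by rw [neg_pow, Complex.I_pow_four]; norm_num
    conv_lhs => rw [← Nat.div_add_mod n 4, pow_add, pow_mul, h4, one_pow, one_mul]
  have hif : (if 4 ∣ n then (4:ℂ) else 0) = if n % 4 = 0 then 4 else 0 := by
    simp [Nat.dvd_iff_mod_eq_zero]
  rw [hI, hneg1, hnegI, hif]
  have h : n % 4 < 4 := Nat.mod_lt _ (by norm_num)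
  interval_cases hn : n % 4 <;>
    simp [pow_succ, Complex.I_sq] <;> ring

lemma pow14 (hmod : N % 8 = 4) :
    ((1:ℂ) + I)^N = -2^(N/2) ∧ ((1:ℂ) - I)^N = -2^(N/2) := by
  obtain ⟨t, rfl⟩ : ∃ t, N = 8 * t + 4 := ⟨N / 8, by omega⟩
  have e1 : ((1:ℂ) + I)^2 = 2 * I := by rw [add_sq, Complex.I_sq]; ring
  have e2 : ((1:ℂ) - I)^2 = -(2 * I) := by rw [sub_sq, Complex.I_sq]; ring
  have eI : I ^ (4 * t + 2) = -1 := by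
    rw [pow_add, pow_mul, Complex.I_pow_four, one_pow, one_mul, Complex.I_sq]
  have eI' : (-I) ^ (4 * t + 2) = -1 := by
    rw [neg_pow, eI, Even.neg_one_pow ⟨2 * t + 1, by ring⟩]
    norm_num
  rw [show (8 * t + 4) / 2 = 4 * t + 2 by omega,
    show 8 * t + 4 = 2 * (4 * t + 2) by ring]
  constructor
  · rw [pow_mul, e1, mul_pow, eI]; ring
  · rw [pow_mul, e2, neg_pow (2 * I), mul_pow, eI, Even.neg_one_pow ⟨2 * t + 1, by ring⟩]
    ring


open Complex

def DE (W : Submodule (ZMod 2) (Vn N)) : Prop := ∀ v ∈ W, 4 ∣ hammingNorm v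

noncomputable def XW (W : Submodule (ZMod 2) (Vn N)) : Finset (Vn N) :=
  univ.filter (fun v => 4 ∣ hammingNorm v ∧ ∀ w ∈ W, dp v w = 0)

lemma XW_eq (W : Submodule (ZMod 2) (Vn N)) :
    XW W = (perp W).filter (fun v => 4 ∣ hammingNorm v) := by
  ext v; simp [XW, perp]; tauto

variable {W : Submodule (ZMod 2) (Vn N)}

lemma sum_c_one :
    ∑ w ∈ Wfin W, ((1:ℂ) + 1) ^ (N - hammingNorm w) * (1 - 1) ^ (hammingNorm w) = 2 ^ N := by
  rw [Finset.sum_eq_single_of_mem 0 ((mem_Wfin W).mpr W.zero_mem)]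
  · norm_num
  · intro w _ hne
    have h : hammingNorm w ≠ 0 := fun h => hne (hammingNorm_eq_zero.mp h)
    simp [zero_pow h]

lemma sum_c_negone :
    ∑ w ∈ Wfin W, ((1:ℂ) + (-1)) ^ (N - hammingNorm w) * (1 - (-1)) ^ (hammingNorm w)
      = if allOnes N ∈ W then 2 ^ N else 0 := by
  have hterm : ∀ w : Vn N, w ≠ allOnes N →
      ((1:ℂ) + (-1)) ^ (N - hammingNorm w) * (1 - (-1)) ^ (hammingNorm w) = 0 := by
    intro w hne
    have hlt : N - hammingNorm w ≠ 0 := by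
      have h1 : hammingNorm w ≤ N := wt_le w
      have h2 : hammingNorm w ≠ N := fun hh => hne ((wt_eq_N_iff w).mp hh)
      omega
    norm_num [zero_pow hlt]
  split_ifs with h
  · rw [Finset.sum_eq_single_of_mem (allOnes N) ((mem_Wfin W).mpr h)]
    · norm_num [wt_allOnes]
    · intro w _ hne; exact hterm w hne
  · apply Finset.sum_eq_zero
    intro w hw
    exact hterm w (fun hh => h (hh ▸ (mem_Wfin W).mp hw))

lemma sum_c_I (hDE : DE W) :
    ∑ w ∈ Wfin W, ((1:ℂ) + I) ^ (N - hammingNorm w) * (1 - I) ^ (hammingNorm w)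
      = 2 ^ (finrank (ZMod 2) W) * ((1:ℂ) + I) ^ N := by
  have hterm : ∀ w ∈ Wfin W,
      ((1:ℂ) + I) ^ (N - hammingNorm w) * (1 - I) ^ (hammingNorm w) = ((1:ℂ) + I) ^ N := by
    intro w hw
    obtain ⟨t, ht⟩ := hDE w ((mem_Wfin W).mp hw)
    have hfac : ((1:ℂ) - I) = (1 + I) * (-I) := by linear_combination Complex.I_sq
    have h4 : (-I : ℂ) ^ hammingNorm w = 1 := by
      rw [ht, pow_mul, show (-I:ℂ)^4 = 1 by rw [neg_pow, Complex.I_pow_four]; norm_num, one_pow]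
    rw [hfac, mul_pow, h4, mul_one, ← pow_add,
      Nat.sub_add_cancel (wt_le w)]
  rw [Finset.sum_congr rfl hterm, Finset.sum_const, card_Wfin, nsmul_eq_mul]
  push_cast
  ring

lemma sum_c_negI (hDE : DE W) :
    ∑ w ∈ Wfin W, ((1:ℂ) + (-I)) ^ (N - hammingNorm w) * (1 - (-I)) ^ (hammingNorm w)
      = 2 ^ (finrank (ZMod 2) W) * ((1:ℂ) - I) ^ N := by
  have hterm : ∀ w ∈ Wfin W,
      ((1:ℂ) + (-I)) ^ (N - hammingNorm w) * (1 - (-I)) ^ (hammingNorm w) = ((1:ℂ) - I) ^ N := by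
    intro w hw
    obtain ⟨t, ht⟩ := hDE w ((mem_Wfin W).mp hw)
    have hfac : ((1:ℂ) - (-I)) = (1 + (-I)) * I := by linear_combination Complex.I_sq
    have h4 : (I : ℂ) ^ hammingNorm w = 1 := by
      rw [ht, pow_mul, Complex.I_pow_four, one_pow]
    rw [hfac, mul_pow, h4, mul_one, ← pow_add, Nat.sub_add_cancel (wt_le w), sub_eq_add_neg]
  rw [Finset.sum_congr rfl hterm, Finset.sum_const, card_Wfin, nsmul_eq_mul]
  push_cast
  ring

lemma Xcard_complex (hDE : DE W) (hmod : N % 8 = 4) :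
    (2:ℂ) ^ (finrank (ZMod 2) W) * (4 * (XW W).card + 2 ^ (N / 2 + 1))
      = (if allOnes N ∈ W then 2 else 1) * 2 ^ N := by
  have h4X : (4:ℂ) * (XW W).card
      = ∑ v ∈ perp W, ((1:ℂ) + I ^ (hammingNorm v) + (-1:ℂ) ^ (hammingNorm v)
          + (-I) ^ (hammingNorm v)) := by
    rw [Finset.sum_congr rfl (fun v _ => quad (hammingNorm v)), ← Finset.sum_filter, ← XW_eq,
      Finset.sum_const, nsmul_eq_mul]
    ring
  have expand : (2:ℂ) ^ (finrank (ZMod 2) W) * (4 * (XW W).card)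
      = 2 ^ N + 2 ^ (finrank (ZMod 2) W) * ((1:ℂ) + I) ^ N
        + (if allOnes N ∈ W then (2:ℂ) ^ N else 0)
        + 2 ^ (finrank (ZMod 2) W) * ((1:ℂ) - I) ^ N := by
    rw [h4X]
    have split : ∑ v ∈ perp W, ((1:ℂ) + I ^ (hammingNorm v) + (-1:ℂ) ^ (hammingNorm v)
          + (-I) ^ (hammingNorm v))
        = (∑ v ∈ perp W, ((1:ℂ)) ^ (hammingNorm v)) + (∑ v ∈ perp W, I ^ (hammingNorm v))
          + (∑ v ∈ perp W, (-1:ℂ) ^ (hammingNorm v)) + (∑ v ∈ perp W, (-I) ^ (hammingNorm v)) := by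
      rw [← Finset.sum_add_distrib, ← Finset.sum_add_distrib, ← Finset.sum_add_distrib]
      exact Finset.sum_congr rfl fun v _ => by rw [one_pow]
    rw [split]
    rw [mul_add, mul_add, mul_add, perp_sum W 1, perp_sum W I, perp_sum W (-1), perp_sum W (-I),
      sum_c_one, sum_c_negone, sum_c_I hDE, sum_c_negI hDE]
  have hI := (pow14 hmod).1
  have hnegI := (pow14 hmod).2
  have hhalf : (2:ℂ) ^ (N / 2 + 1) = 2 * 2 ^ (N / 2) := by rw [pow_succ]; ring
  split_ifs with h <;> [skip; skip] <;>
  · rw [mul_add, expand, hI, hnegI, hhalf]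
    simp only [h, if_true, if_false, reduceIte]
    ring

noncomputable def ov (v w : Vn N) : ℕ := (univ.filter fun i => v i ≠ 0 ∧ w i ≠ 0).card

lemma wt_add_ov (v w : Vn N) :
    hammingNorm (v + w) + 2 * ov v w = hammingNorm v + hammingNorm w := by
  have key : ∀ i : Fin N,
      ((if (v + w) i ≠ 0 then 1 else 0) + 2 * (if v i ≠ 0 ∧ w i ≠ 0 then 1 else 0) : ℕ)
        = (if v i ≠ 0 then 1 else 0) + (if w i ≠ 0 then 1 else 0) := by
    intro i
    have hvw : (v + w) i = v i + w i := rfl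
    rcases zmod2_cases (v i) with h | h <;> rcases zmod2_cases (w i) with h' | h' <;>
      simp [hvw, h, h', show ((1:ZMod 2) + 1) = 0 by decide]
  have expand : ∀ (u : Vn N), hammingNorm u = ∑ i, (if u i ≠ 0 then 1 else 0) := by
    intro u; rw [hammingNorm, Finset.card_filter]
  rw [expand, expand, expand, ov, Finset.card_filter, Finset.mul_sum, ← Finset.sum_add_distrib,
    ← Finset.sum_add_distrib]
  exact Finset.sum_congr rfl fun i _ => key i

lemma dp_eq_ov (v w : Vn N) : dp v w = (ov v w : ZMod 2) := by
  rw [dp, ov, Finset.card_filter, Nat.cast_sum]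
  refine Finset.sum_congr rfl fun i _ => ?_
  rcases zmod2_cases (v i) with h | h <;> rcases zmod2_cases (w i) with h' | h' <;>
    simp [h, h']

lemma dp_comm (v w : Vn N) : dp v w = dp w v := by
  rw [dp_eq_ov, dp_eq_ov]
  congr 1
  rw [ov, ov]
  congr 1
  ext i
  simp [and_comm]

lemma dvd4_add {v w : Vn N} (hv : 4 ∣ hammingNorm v) (hw : 4 ∣ hammingNorm w)
    (h : dp v w = 0) : 4 ∣ hammingNorm (v + w) := by
  have h2 : (2:ℕ) ∣ ov v w := by
    rwa [dp_eq_ov, ZMod.natCast_eq_zero_iff] at h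
  have := wt_add_ov v w
  omega

lemma dp_zero_of_dvd4 {v w : Vn N} (hv : 4 ∣ hammingNorm v) (hw : 4 ∣ hammingNorm w)
    (hvw : 4 ∣ hammingNorm (v + w)) : dp v w = 0 := by
  have := wt_add_ov v w
  have h2 : (2:ℕ) ∣ ov v w := by omega
  rw [dp_eq_ov, ZMod.natCast_eq_zero_iff]
  exact h2

lemma DE_orth {W : Submodule (ZMod 2) (Vn N)} (hDE : DE W) {v w : Vn N}
    (hv : v ∈ W) (hw : w ∈ W) : dp v w = 0 :=
  dp_zero_of_dvd4 (hDE v hv) (hDE w hw) (hDE _ (W.add_mem hv hw))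

lemma finrank_Vn : finrank (ZMod 2) (Vn N) = N := by
  rw [Module.finrank_pi]
  simp

lemma Xcard_key (hDE : DE W) (hmod : N % 8 = 4) {m : ℕ} (hm : finrank (ZMod 2) W = m) :
    4 * (XW W).card + 2 ^ (N / 2 + 1) = (if allOnes N ∈ W then 2 else 1) * 2 ^ (N - m) := by
  have hmN : m ≤ N := by
    have h1 := Submodule.finrank_le W
    rw [hm, finrank_Vn] at h1
    exact h1
  have hC := Xcard_complex hDE hmod
  rw [hm] at hC
  have h2 : ((2:ℂ)) ^ m ≠ 0 := pow_ne_zero _ two_ne_zero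
  have key : ((4 * (XW W).card + 2 ^ (N / 2 + 1) : ℕ) : ℂ)
      = (((if allOnes N ∈ W then 2 else 1) * 2 ^ (N - m) : ℕ) : ℂ) := by
    apply mul_left_cancel₀ h2
    push_cast
    rw [hC]
    have hpow : (2:ℂ) ^ N = 2 ^ m * 2 ^ (N - m) := by
      rw [← pow_add, Nat.add_sub_cancel' hmN]
    split_ifs <;> rw [hpow] <;> ring
  exact_mod_cast key

noncomputable def Ext (W : Submodule (ZMod 2) (Vn N)) (k : ℕ) :
    Finset (Submodule (ZMod 2) (Vn N)) :=
  univ.filter (fun V => W ≤ V ∧ finrank (ZMod 2) V = k ∧ DE V)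

lemma span_elt {v x : Vn N} (hx : x ∈ Submodule.span (ZMod 2) {v}) : x = 0 ∨ x = v := by
  obtain ⟨c, rfl⟩ := Submodule.mem_span_singleton.mp hx
  rcases zmod2_cases c with h | h <;> subst h <;> simp

lemma finrank_sup_span {W : Submodule (ZMod 2) (Vn N)} {v : Vn N} (hv : v ∉ W) :
    finrank (ZMod 2) ↥(W ⊔ Submodule.span (ZMod 2) {v})
      = finrank (ZMod 2) W + 1 := by
  have hv0 : v ≠ 0 := fun h => hv (h ▸ W.zero_mem)
  have hinf : W ⊓ Submodule.span (ZMod 2) {v} = ⊥ := by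
    rw [Submodule.eq_bot_iff]
    intro x hx
    rcases span_elt hx.2 with rfl | rfl
    · rfl
    · exact absurd hx.1 hv
  have := Submodule.finrank_sup_add_finrank_inf_eq W (Submodule.span (ZMod 2) {v})
  rw [hinf, finrank_bot, finrank_span_singleton hv0] at this
  omega

lemma DE_sup_span {W : Submodule (ZMod 2) (Vn N)} {v : Vn N} (hDE : DE W)
    (hv4 : 4 ∣ hammingNorm v) (hvperp : ∀ w ∈ W, dp v w = 0) :
    DE (W ⊔ Submodule.span (ZMod 2) {v}) := by
  intro x hx
  rw [Submodule.mem_sup] at hx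
  obtain ⟨w, hw, y, hy, rfl⟩ := hx
  rcases span_elt hy with rfl | rfl
  · rw [add_zero]; exact hDE w hw
  · exact dvd4_add (hDE w hw) hv4 (by rw [dp_comm]; exact hvperp w hw)

lemma Xcard_split (hDE : DE W) {m : ℕ} (hm : finrank (ZMod 2) W = m) :
    (XW W).card = 2 ^ m + (Ext W (m + 1)).card * 2 ^ m := by
  have hWsub : ∀ v ∈ W, v ∈ XW W := by
    intro v hv
    simp only [XW, Finset.mem_filter, Finset.mem_univ, true_and]
    exact ⟨hDE v hv, fun w hw => DE_orth hDE hv hw⟩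
  have hsplit : ((XW W).filter (· ∈ W)).card + ((XW W).filter (· ∉ W)).card = (XW W).card :=
    Finset.card_filter_add_card_filter_not _
  have hWcard : ((XW W).filter (· ∈ W)).card = 2 ^ m := by
    have : (XW W).filter (· ∈ W) = Wfin W := by
      ext v
      rw [Finset.mem_filter, mem_Wfin]
      exact ⟨fun h => h.2, fun h => ⟨hWsub v h, h⟩⟩
    rw [this, card_Wfin, hm]
  have hScard : ((XW W).filter (· ∉ W)).card = (Ext W (m + 1)).card * 2 ^ m := by
    rw [Finset.card_eq_sum_card_fiberwise
      (f := fun v => W ⊔ Submodule.span (ZMod 2) {v}) (t := Ext W (m + 1)) ?_]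
    · rw [Finset.sum_congr rfl ?_, Finset.sum_const, smul_eq_mul]
      intro V hV
      simp only [Ext, Finset.mem_filter, Finset.mem_univ, true_and] at hV
      obtain ⟨hWV, hVrank, hVDE⟩ := hV
      have hfib : ((XW W).filter (· ∉ W)).filter
          (fun v => W ⊔ Submodule.span (ZMod 2) {v} = V) = Wfin V \ Wfin W := by
        ext v
        simp only [Finset.mem_filter, Finset.mem_sdiff, mem_Wfin]
        constructor
        · rintro ⟨⟨hvX, hvW⟩, hsup⟩
          refine ⟨?_, hvW⟩
          rw [← hsup]
          exact Submodule.mem_sup_right (Submodule.mem_span_singleton_self v)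
        · rintro ⟨hvV, hvW⟩
          have hvX : v ∈ XW W := by
            simp only [XW, Finset.mem_filter, Finset.mem_univ, true_and]
            exact ⟨hVDE v hvV, fun w hw => DE_orth hVDE hvV (hWV hw)⟩
          refine ⟨⟨hvX, hvW⟩, ?_⟩
          apply Submodule.eq_of_le_of_finrank_eq
          · exact sup_le hWV ((Submodule.span_singleton_le_iff_mem v V).mpr hvV)
          · rw [hVrank, finrank_sup_span hvW, hm]
      rw [hfib, Finset.card_sdiff_of_subset (by intro v; rw [mem_Wfin, mem_Wfin]; exact fun h => hWV h),
        card_Wfin, card_Wfin, hVrank, hm]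
      omega
    · intro v hv
      simp only [Finset.mem_coe, Finset.mem_filter] at hv
      obtain ⟨hvX, hvW⟩ := hv
      simp only [XW, Finset.mem_filter, Finset.mem_univ, true_and] at hvX
      simp only [Ext, Finset.mem_coe, Finset.mem_filter, Finset.mem_univ, true_and]
      exact ⟨le_sup_left, by rw [finrank_sup_span hvW, hm],
        DE_sup_span hDE hvX.1 hvX.2⟩
  omega

section Hyperplanes

variable {M : Type*} [AddCommGroup M] [Module (ZMod 2) M] [FiniteDimensional (ZMod 2) M]
  [Finite M]

local instance : Finite (M →ₗ[ZMod 2] ZMod 2) :=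
  Finite.of_injective (fun f => (f : M → ZMod 2)) DFunLike.coe_injective

lemma lm_ext_of_ker {f g : M →ₗ[ZMod 2] ZMod 2} (h : LinearMap.ker f = LinearMap.ker g) :
    f = g := by
  ext y
  have h1 : f y = 0 ↔ g y = 0 := by
    rw [← LinearMap.mem_ker, ← LinearMap.mem_ker, h]
  rcases zmod2_cases (f y) with hf | hf <;> rcases zmod2_cases (g y) with hg | hg <;>
    rw [hf, hg] <;> simp_all

lemma exists_ker {k : ℕ} (hk : finrank (ZMod 2) M = k) (hk1 : 1 ≤ k)
    (W : Submodule (ZMod 2) M) (hW : finrank (ZMod 2) W = k - 1) :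
    ∃ f : M →ₗ[ZMod 2] ZMod 2, LinearMap.ker f = W := by
  have hWle : finrank (ZMod 2) W ≤ finrank (ZMod 2) M := Submodule.finrank_le W
  have hq : finrank (ZMod 2) (M ⧸ W) = 1 := by
    have := Submodule.finrank_quotient_add_finrank W
    omega
  let b : Basis (Fin 1) (ZMod 2) (M ⧸ W) := Module.finBasisOfFinrankEq (ZMod 2) (M ⧸ W) hq
  let e : (M ⧸ W) ≃ₗ[ZMod 2] ZMod 2 :=
    b.equivFun ≪≫ₗ LinearEquiv.funUnique (Fin 1) (ZMod 2) (ZMod 2)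
  refine ⟨e.toLinearMap ∘ₗ W.mkQ, ?_⟩
  rw [LinearMap.ker_comp, LinearEquiv.ker, Submodule.comap_bot, Submodule.ker_mkQ]

lemma finrank_ker_of_ne {k : ℕ} (hk : finrank (ZMod 2) M = k)
    {f : M →ₗ[ZMod 2] ZMod 2} (hf : f ≠ 0) :
    finrank (ZMod 2) (LinearMap.ker f) = k - 1 ∧ 1 ≤ k := by
  have hy : ∃ y, f y = 1 := by
    by_contra h
    push_neg at h
    exact hf (by ext y; exact (zmod2_cases (f y)).resolve_right (h y))
  obtain ⟨y, hy⟩ := hy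
  have hsurj : LinearMap.range f = ⊤ := by
    rw [LinearMap.range_eq_top]
    intro c
    rcases zmod2_cases c with rfl | rfl
    · exact ⟨0, map_zero f⟩
    · exact ⟨y, hy⟩
  have := LinearMap.finrank_range_add_finrank_ker f
  rw [hsurj, finrank_top, Module.finrank_self, hk] at this
  omega

lemma card_dual {k : ℕ} (hk : finrank (ZMod 2) M = k) :
    Nat.card (M →ₗ[ZMod 2] ZMod 2) = 2 ^ k := by
  letI : Fintype (M →ₗ[ZMod 2] ZMod 2) := Fintype.ofFinite _
  rw [Nat.card_eq_fintype_card]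
  have h := card_eq_pow_finrank (K := ZMod 2) (V := M →ₗ[ZMod 2] ZMod 2)
  rw [ZMod.card, Subspace.dual_finrank_eq, hk] at h
  exact h

lemma card_hyperplanes {k : ℕ} (hk : finrank (ZMod 2) M = k) (hk1 : 1 ≤ k) :
    Nat.card {W : Submodule (ZMod 2) M // finrank (ZMod 2) W = k - 1} = 2 ^ k - 1 := by
  have e : {f : M →ₗ[ZMod 2] ZMod 2 // f ≠ 0}
      ≃ {W : Submodule (ZMod 2) M // finrank (ZMod 2) W = k - 1} := by
    refine Equiv.ofBijective
      (fun f => ⟨LinearMap.ker f.1, (finrank_ker_of_ne hk f.2).1⟩) ⟨?_, ?_⟩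
    · rintro ⟨f, hf⟩ ⟨g, hg⟩ h
      exact Subtype.ext (lm_ext_of_ker (congrArg Subtype.val h))
    · rintro ⟨W, hW⟩
      obtain ⟨f, hf⟩ := exists_ker hk hk1 W hW
      have hfne : f ≠ 0 := by
        rintro rfl
        rw [LinearMap.ker_zero] at hf
        rw [← hf, finrank_top, hk] at hW
        omega
      exact ⟨⟨f, hfne⟩, Subtype.ext hf⟩
  rw [← Nat.card_congr e]
  letI : Fintype (M →ₗ[ZMod 2] ZMod 2) := Fintype.ofFinite _
  rw [Nat.card_eq_fintype_card, Fintype.card_subtype_compl, Fintype.card_subtype_eq]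
  have := card_dual (M := M) hk
  rw [Nat.card_eq_fintype_card] at this
  omega

lemma card_hyperplanes_avoid {k : ℕ} (hk : finrank (ZMod 2) M = k)
    {x : M} (hx : x ≠ 0) :
    Nat.card {W : Submodule (ZMod 2) M // finrank (ZMod 2) W = k - 1 ∧ x ∉ W}
      = 2 ^ (k - 1) := by
  have hk1 : 1 ≤ k := by
    rcases Nat.eq_zero_or_pos k with rfl | h
    · exfalso
      have : finrank (ZMod 2) M = 0 := hk
      have hsub : Subsingleton M := by
        rwa [Module.finrank_zero_iff (R := ZMod 2) (M := M)] at this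
      exact hx (Subsingleton.elim x 0)
    · exact h
  have e : {f : M →ₗ[ZMod 2] ZMod 2 // f x = 1}
      ≃ {W : Submodule (ZMod 2) M // finrank (ZMod 2) W = k - 1 ∧ x ∉ W} := by
    refine Equiv.ofBijective (fun f =>
      ⟨LinearMap.ker f.1,
        (finrank_ker_of_ne hk (fun h0 => by
          have h1 := f.2; rw [h0] at h1; simp at h1)).1,
        fun hmem => by
          have := LinearMap.mem_ker.mp hmem
          rw [f.2] at this
          exact one_ne_zero this⟩) ⟨?_, ?_⟩
    · rintro ⟨f, hf⟩ ⟨g, hg⟩ h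
      exact Subtype.ext (lm_ext_of_ker (congrArg Subtype.val h))
    · rintro ⟨W, hW, hxW⟩
      obtain ⟨f, hf⟩ := exists_ker hk hk1 W hW
      have hfx : f x = 1 := by
        have : x ∉ LinearMap.ker f := hf ▸ hxW
        rcases zmod2_cases (f x) with h0 | h1
        · exact absurd (LinearMap.mem_ker.mpr h0) this
        · exact h1
      exact ⟨⟨f, hfx⟩, Subtype.ext hf⟩
  rw [← Nat.card_congr e]
  -- count functionals with f x = 1
  obtain ⟨f0, hf0⟩ : ∃ f0 : M →ₗ[ZMod 2] ZMod 2, f0 x = 1 := by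
    have hnot : ¬ ∀ φ : Module.Dual (ZMod 2) M, φ x = 0 := by
      rw [Module.forall_dual_apply_eq_zero_iff]
      exact hx
    push_neg at hnot
    obtain ⟨φ, hφ⟩ := hnot
    exact ⟨φ, (zmod2_cases (φ x)).resolve_left hφ⟩
  have hself : ∀ g : M →ₗ[ZMod 2] ZMod 2, g + g = 0 := by
    intro g; ext y
    exact CharTwo.add_self_eq_zero _
  have e2 : {f : M →ₗ[ZMod 2] ZMod 2 // f x = 0} ≃ {f : M →ₗ[ZMod 2] ZMod 2 // f x = 1} :=
    { toFun := fun f => ⟨f.1 + f0, by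
        simp only [LinearMap.add_apply, f.2, hf0, zero_add]⟩
      invFun := fun f => ⟨f.1 + f0, by
        simp only [LinearMap.add_apply, f.2, hf0]
        decide⟩
      left_inv := fun f => Subtype.ext (by
        simp only [add_assoc, hself, add_zero])
      right_inv := fun f => Subtype.ext (by
        simp only [add_assoc, hself, add_zero]) }
  letI : Fintype (M →ₗ[ZMod 2] ZMod 2) := Fintype.ofFinite _
  have hpart : Fintype.card {f : M →ₗ[ZMod 2] ZMod 2 // f x = 0}
      + Fintype.card {f : M →ₗ[ZMod 2] ZMod 2 // f x = 1}
      = Fintype.card (M →ₗ[ZMod 2] ZMod 2) := by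
    rw [Fintype.card_subtype, Fintype.card_subtype, ← Finset.card_union_of_disjoint (by
      rw [Finset.disjoint_filter]
      intro g _ h0 h1
      rw [h0] at h1
      exact one_ne_zero h1.symm)]
    rw [← Finset.filter_or]
    rw [Finset.filter_true_of_mem (fun g _ => (zmod2_cases (g x)))]
    exact Finset.card_univ
  have hcards : Fintype.card {f : M →ₗ[ZMod 2] ZMod 2 // f x = 0}
      = Fintype.card {f : M →ₗ[ZMod 2] ZMod 2 // f x = 1} := Fintype.card_congr e2
  have hdual := card_dual (M := M) hk
  rw [Nat.card_eq_fintype_card] at hdual ⊢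
  have hpow : 2 ^ k = 2 * 2 ^ (k - 1) := by
    rw [← pow_succ']
    congr 1
    omega
  omega

end Hyperplanes

lemma map_subtype_rank (V : Submodule (ZMod 2) (Vn N)) (W' : Submodule (ZMod 2) ↥V) :
    finrank (ZMod 2) (Submodule.map V.subtype W') = finrank (ZMod 2) W' :=
  ((Submodule.equivSubtypeMap V W').finrank_eq).symm

lemma map_subtype_mem (V : Submodule (ZMod 2) (Vn N)) (W' : Submodule (ZMod 2) ↥V)
    {x : Vn N} (hxV : x ∈ V) :
    x ∈ Submodule.map V.subtype W' ↔ (⟨x, hxV⟩ : ↥V) ∈ W' := by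
  constructor
  · rintro ⟨y, hy, hyx⟩
    have : y = ⟨x, hxV⟩ := Subtype.ext hyx
    rwa [this] at hy
  · intro h
    exact ⟨⟨x, hxV⟩, h, rfl⟩

lemma card_hyp (V : Submodule (ZMod 2) (Vn N)) {k : ℕ} (hV : finrank (ZMod 2) V = k)
    (hk : 1 ≤ k) :
    (univ.filter fun W : Submodule (ZMod 2) (Vn N) =>
      W ≤ V ∧ finrank (ZMod 2) W = k - 1).card = 2 ^ k - 1 := by
  have E : {W' : Submodule (ZMod 2) ↥V // finrank (ZMod 2) W' = k - 1}
      ≃ {W : Submodule (ZMod 2) (Vn N) // W ≤ V ∧ finrank (ZMod 2) W = k - 1} := by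
    refine Equiv.ofBijective (fun W' => ⟨Submodule.map V.subtype W'.1,
        Submodule.map_subtype_le V W'.1, by rw [map_subtype_rank]; exact W'.2⟩) ⟨?_, ?_⟩
    · rintro ⟨a, ha⟩ ⟨b, hb⟩ h
      exact Subtype.ext (Submodule.map_injective_of_injective V.injective_subtype
        (congrArg Subtype.val h))
    · rintro ⟨W, hWV, hW⟩
      have hmc : Submodule.map V.subtype (Submodule.comap V.subtype W) = W := by
        rw [Submodule.map_comap_subtype, inf_eq_right.mpr hWV]
      refine ⟨⟨Submodule.comap V.subtype W, ?_⟩, Subtype.ext hmc⟩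
      have := map_subtype_rank V (Submodule.comap V.subtype W)
      rw [hmc] at this
      omega
  have hint := card_hyperplanes (M := ↥V) hV hk
  rw [Nat.card_congr E] at hint
  rw [← hint, Nat.card_eq_fintype_card, Fintype.card_subtype]

lemma card_hyp_avoid (V : Submodule (ZMod 2) (Vn N)) {k : ℕ} (hV : finrank (ZMod 2) V = k)
    {x : Vn N} (hxV : x ∈ V) (hx : x ≠ 0) :
    (univ.filter fun W : Submodule (ZMod 2) (Vn N) =>
      W ≤ V ∧ finrank (ZMod 2) W = k - 1 ∧ x ∉ W).card = 2 ^ (k - 1) := by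
  have E : {W' : Submodule (ZMod 2) ↥V // finrank (ZMod 2) W' = k - 1 ∧ (⟨x, hxV⟩ : ↥V) ∉ W'}
      ≃ {W : Submodule (ZMod 2) (Vn N) //
          W ≤ V ∧ finrank (ZMod 2) W = k - 1 ∧ x ∉ W} := by
    refine Equiv.ofBijective (fun W' => ⟨Submodule.map V.subtype W'.1,
        Submodule.map_subtype_le V W'.1, by rw [map_subtype_rank]; exact W'.2.1,
        fun hmem => W'.2.2 ((map_subtype_mem V W'.1 hxV).mp hmem)⟩) ⟨?_, ?_⟩
    · rintro ⟨a, ha⟩ ⟨b, hb⟩ h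
      exact Subtype.ext (Submodule.map_injective_of_injective V.injective_subtype
        (congrArg Subtype.val h))
    · rintro ⟨W, hWV, hW, hxW⟩
      have hmc : Submodule.map V.subtype (Submodule.comap V.subtype W) = W := by
        rw [Submodule.map_comap_subtype, inf_eq_right.mpr hWV]
      have hr := map_subtype_rank V (Submodule.comap V.subtype W)
      rw [hmc] at hr
      refine ⟨⟨Submodule.comap V.subtype W, by omega, fun hmem => hxW ?_⟩, Subtype.ext hmc⟩
      rw [← hmc]
      exact (map_subtype_mem V _ hxV).mpr hmem
  have hx' : (⟨x, hxV⟩ : ↥V) ≠ 0 := fun h => hx (congrArg Subtype.val h)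
  have hint := card_hyperplanes_avoid (M := ↥V) hV hx'
  rw [Nat.card_congr E] at hint
  rw [← hint, Nat.card_eq_fintype_card, Fintype.card_subtype]

noncomputable def Afin (k : ℕ) : Finset (Submodule (ZMod 2) (Vn N)) :=
  univ.filter (fun C => finrank (ZMod 2) C = k ∧ DE C ∧ allOnes N ∈ C)

noncomputable def Bfin (k : ℕ) : Finset (Submodule (ZMod 2) (Vn N)) :=
  univ.filter (fun C => finrank (ZMod 2) C = k ∧ DE C ∧ allOnes N ∉ C)

lemma mem_Afin {k : ℕ} {C : Submodule (ZMod 2) (Vn N)} :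
    C ∈ Afin (N := N) k ↔ finrank (ZMod 2) C = k ∧ DE C ∧ allOnes N ∈ C := by
  simp [Afin]

lemma mem_Bfin {k : ℕ} {C : Submodule (ZMod 2) (Vn N)} :
    C ∈ Bfin (N := N) k ↔ finrank (ZMod 2) C = k ∧ DE C ∧ allOnes N ∉ C := by
  simp [Bfin]

lemma allOnes_ne_zero (hN : 1 ≤ N) : allOnes N ≠ 0 := by
  intro h
  have := congrFun h ⟨0, hN⟩
  simp [allOnes] at this

lemma dp_allOnes {w : Vn N} (h2 : 2 ∣ hammingNorm w) : dp w (allOnes N) = 0 := by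
  have hov : ov w (allOnes N) = hammingNorm w := by
    rw [ov, hammingNorm]
    congr 1
    ext i
    simp [allOnes]
  rw [dp_eq_ov, hov, ZMod.natCast_eq_zero_iff]
  exact h2

noncomputable def V1 (W : Submodule (ZMod 2) (Vn N)) : Submodule (ZMod 2) (Vn N) :=
  W ⊔ Submodule.span (ZMod 2) {allOnes N}

lemma V1_spec (hmod : N % 8 = 4) {W : Submodule (ZMod 2) (Vn N)} (hDE : DE W)
    (h1W : allOnes N ∉ W) {m : ℕ} (hm : finrank (ZMod 2) W = m) :
    W ≤ V1 W ∧ finrank (ZMod 2) (V1 W) = m + 1 ∧ DE (V1 W) ∧ allOnes N ∈ V1 W := by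
  refine ⟨le_sup_left, by rw [V1, finrank_sup_span h1W, hm], ?_,
    Submodule.mem_sup_right (Submodule.mem_span_singleton_self _)⟩
  apply DE_sup_span hDE
  · rw [wt_allOnes]; omega
  · intro w hw
    rw [dp_comm]
    exact dp_allOnes (dvd_trans (by norm_num) (hDE w hw))

lemma V1_unique {W V : Submodule (ZMod 2) (Vn N)} {m : ℕ} (hm : finrank (ZMod 2) W = m)
    (h1W : allOnes N ∉ W) (hWV : W ≤ V) (hVrank : finrank (ZMod 2) V = m + 1)
    (h1V : allOnes N ∈ V) : V = V1 W := by
  have hle : V1 W ≤ V :=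
    sup_le hWV ((Submodule.span_singleton_le_iff_mem _ V).mpr h1V)
  have hrank : finrank (ZMod 2) (V1 W) = m + 1 := by rw [V1, finrank_sup_span h1W, hm]
  exact (Submodule.eq_of_le_of_finrank_eq hle (by rw [hrank, hVrank])).symm

lemma R1nat (hmod : N % 8 = 4) {k : ℕ} (hk1 : 1 ≤ k) :
    (Bfin (N := N) (k - 1)).card = (Afin (N := N) k).card * 2 ^ (k - 1) := by
  have hN4 : 4 ≤ N := by omega
  set pr := fun p : Submodule (ZMod 2) (Vn N) × Submodule (ZMod 2) (Vn N) =>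
    p.1 ∈ Bfin (N := N) (k - 1) ∧ p.2 ∈ Afin (N := N) k ∧ p.1 ≤ p.2 with hpr
  set P := (univ ×ˢ univ).filter pr with hP
  have count1 : P.card = (Bfin (N := N) (k - 1)).card := by
    rw [Finset.card_eq_sum_card_fiberwise (f := Prod.fst) (t := Bfin (N := N) (k - 1))
      (fun p hp => ((Finset.mem_filter.mp hp).2).1)]
    rw [Finset.sum_congr rfl (fun W hW => ?_), Finset.sum_const, smul_eq_mul, mul_one]
    obtain ⟨hWrank, hWDE, hW1⟩ := (mem_Bfin).mp hW
    obtain ⟨hle, hrank, hDE1, hmem1⟩ := V1_spec hmod hWDE hW1 hWrank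
    have hsingle : P.filter (fun p => p.1 = W) = {(W, V1 W)} := by
      ext p
      simp only [Finset.mem_filter, Finset.mem_singleton, hP, hpr, Finset.mem_product]
      constructor
      · rintro ⟨⟨-, hBW, hA, hle'⟩, h1⟩
        obtain ⟨hVrank, hVDE, hV1⟩ := (mem_Afin).mp hA
        have : p.2 = V1 W := by
          apply V1_unique hWrank hW1 (h1 ▸ hle') _ hV1
          rw [hVrank]; omega
        exact Prod.ext h1 this
      · rintro rfl
        refine ⟨⟨by simp, hW, (mem_Afin).mpr ⟨by rw [hrank]; omega, hDE1, hmem1⟩, hle⟩, rfl⟩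
    rw [hsingle, Finset.card_singleton]
  have count2 : P.card = (Afin (N := N) k).card * 2 ^ (k - 1) := by
    rw [Finset.card_eq_sum_card_fiberwise (f := Prod.snd) (t := Afin (N := N) k)
      (fun p hp => ((Finset.mem_filter.mp hp).2).2.1)]
    rw [Finset.sum_congr rfl (fun V hV => ?_), Finset.sum_const, smul_eq_mul]
    obtain ⟨hVrank, hVDE, hV1⟩ := (mem_Afin).mp hV
    have himg : P.filter (fun p => p.2 = V)
        = (univ.filter fun W : Submodule (ZMod 2) (Vn N) =>
            W ≤ V ∧ finrank (ZMod 2) W = k - 1 ∧ allOnes N ∉ W).image (fun W => (W, V)) := by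
      ext p
      simp only [Finset.mem_filter, Finset.mem_image, hP, hpr, Finset.mem_product]
      constructor
      · rintro ⟨⟨-, hBW, hA, hle'⟩, h2⟩
        obtain ⟨hWrank, hWDE, hW1⟩ := (mem_Bfin).mp hBW
        exact ⟨p.1, ⟨Finset.mem_univ _, h2 ▸ hle', hWrank, hW1⟩, Prod.ext rfl h2.symm⟩
      · rintro ⟨W, ⟨-, hle', hWrank, hW1⟩, rfl⟩
        exact ⟨⟨by simp, (mem_Bfin).mpr ⟨hWrank, fun v hv => hVDE v (hle' hv), hW1⟩,
          hV, hle'⟩, rfl⟩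
    rw [himg, Finset.card_image_of_injective _ (fun a b h => (Prod.ext_iff.mp h).1),
      card_hyp_avoid V hVrank hV1 (allOnes_ne_zero (by omega))]
  omega

lemma R2nat (hmod : N % 8 = 4) {k : ℕ} (hk1 : 1 ≤ k) :
    (Bfin (N := N) k).card * (2 ^ k - 1)
      = ∑ W ∈ Bfin (N := N) (k - 1), ((Ext W k).card - 1) := by
  set pr := fun p : Submodule (ZMod 2) (Vn N) × Submodule (ZMod 2) (Vn N) =>
    p.1 ∈ Bfin (N := N) (k - 1) ∧ p.2 ∈ Bfin (N := N) k ∧ p.1 ≤ p.2 with hpr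
  set P := (univ ×ˢ univ).filter pr with hP
  have count1 : P.card = ∑ W ∈ Bfin (N := N) (k - 1), ((Ext W k).card - 1) := by
    rw [Finset.card_eq_sum_card_fiberwise (f := Prod.fst) (t := Bfin (N := N) (k - 1))
      (fun p hp => ((Finset.mem_filter.mp hp).2).1)]
    refine Finset.sum_congr rfl (fun W hW => ?_)
    obtain ⟨hWrank, hWDE, hW1⟩ := (mem_Bfin).mp hW
    obtain ⟨hle, hrank, hDE1, hmem1⟩ := V1_spec hmod hWDE hW1 hWrank
    have himg : P.filter (fun p => p.1 = W)
        = ((Ext W k).filter (fun V => allOnes N ∉ V)).image (fun V => (W, V)) := by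
      ext p
      simp only [Finset.mem_filter, Finset.mem_image, hP, hpr, Finset.mem_product, Ext]
      constructor
      · rintro ⟨⟨-, hBW, hBk, hle'⟩, h1⟩
        obtain ⟨hVrank, hVDE, hV1⟩ := (mem_Bfin).mp hBk
        exact ⟨p.2, ⟨⟨Finset.mem_univ _, h1 ▸ hle', hVrank, hVDE⟩, hV1⟩, Prod.ext h1.symm rfl⟩
      · rintro ⟨V, ⟨⟨-, hle', hVrank, hVDE⟩, hV1⟩, rfl⟩
        exact ⟨⟨by simp, hW, (mem_Bfin).mpr ⟨hVrank, hVDE, hV1⟩, hle'⟩, rfl⟩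
    rw [himg, Finset.card_image_of_injective _ (fun a b h => (Prod.ext_iff.mp h).2)]
    have hsplit := Finset.card_filter_add_card_filter_not
      (s := Ext W k) (p := fun V => allOnes N ∈ V)
    have hone : (Ext W k).filter (fun V => allOnes N ∈ V) = {V1 W} := by
      ext V
      simp only [Finset.mem_filter, Finset.mem_singleton, Ext, Finset.mem_univ, true_and]
      constructor
      · rintro ⟨⟨hle', hVrank, hVDE⟩, hV1⟩
        exact V1_unique hWrank hW1 hle' (by rw [hVrank]; omega) hV1
      · rintro rfl
        exact ⟨⟨hle, by rw [hrank]; omega, hDE1⟩, hmem1⟩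
    have : ((Ext W k).filter (fun V => ¬ allOnes N ∈ V)).card = (Ext W k).card - 1 := by
      rw [hone, Finset.card_singleton] at hsplit
      omega
    rw [← this]
  have count2 : P.card = (Bfin (N := N) k).card * (2 ^ k - 1) := by
    rw [Finset.card_eq_sum_card_fiberwise (f := Prod.snd) (t := Bfin (N := N) k)
      (fun p hp => ((Finset.mem_filter.mp hp).2).2.1)]
    rw [Finset.sum_congr rfl (fun V hV => ?_), Finset.sum_const, smul_eq_mul]
    obtain ⟨hVrank, hVDE, hV1⟩ := (mem_Bfin).mp hV
    have himg : P.filter (fun p => p.2 = V)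
        = (univ.filter fun W : Submodule (ZMod 2) (Vn N) =>
            W ≤ V ∧ finrank (ZMod 2) W = k - 1).image (fun W => (W, V)) := by
      ext p
      simp only [Finset.mem_filter, Finset.mem_image, hP, hpr, Finset.mem_product]
      constructor
      · rintro ⟨⟨-, hBW, hBk, hle'⟩, h2⟩
        obtain ⟨hWrank, hWDE, hW1⟩ := (mem_Bfin).mp hBW
        exact ⟨p.1, ⟨Finset.mem_univ _, h2 ▸ hle', hWrank⟩, Prod.ext rfl h2.symm⟩
      · rintro ⟨W, ⟨-, hle', hWrank⟩, rfl⟩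
        exact ⟨⟨by simp, (mem_Bfin).mpr ⟨hWrank, fun v hv => hVDE v (hle' hv),
          fun h => hV1 (hle' h)⟩, hV, hle'⟩, rfl⟩
    rw [himg, Finset.card_image_of_injective _ (fun a b h => (Prod.ext_iff.mp h).1),
      card_hyp V hVrank hk1]
  omega

lemma Ext_nonempty (hmod : N % 8 = 4) {k : ℕ} (hk1 : 1 ≤ k)
    {W : Submodule (ZMod 2) (Vn N)} (hW : W ∈ Bfin (N := N) (k - 1)) :
    1 ≤ (Ext W k).card := by
  obtain ⟨hWrank, hWDE, hW1⟩ := mem_Bfin.mp hW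
  obtain ⟨hle, hrank, hDE1, hmem1⟩ := V1_spec hmod hWDE hW1 hWrank
  refine Finset.card_pos.mpr ⟨V1 W, ?_⟩
  simp only [Ext, Finset.mem_filter, Finset.mem_univ, true_and]
  exact ⟨hle, by rw [hrank]; omega, hDE1⟩

lemma ExtCardQ (hmod : N % 8 = 4) {k : ℕ} (hk1 : 1 ≤ k) (hk2 : k ≤ N / 2)
    {W : Submodule (ZMod 2) (Vn N)} (hW : W ∈ Bfin (N := N) (k - 1)) :
    ((Ext W k).card : ℚ) = 2 ^ (N - 2 * k) - 2 ^ (N / 2 - k) - 1 := by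
  obtain ⟨hWrank, hWDE, hW1⟩ := mem_Bfin.mp hW
  have hsplit := Xcard_split (W := W) hWDE hWrank
  have hkey := Xcard_key (W := W) hWDE hmod hWrank
  rw [if_neg hW1, one_mul] at hkey
  rw [show k - 1 + 1 = k by omega] at hsplit
  have hsplitQ : ((XW W).card : ℚ) = 2 ^ (k - 1) + (Ext W k).card * 2 ^ (k - 1) := by
    exact_mod_cast congrArg (Nat.cast (R := ℚ)) hsplit
  have hkeyQ : 4 * ((XW W).card : ℚ) + 2 ^ (N / 2 + 1) = 2 ^ (N - (k - 1)) := by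
    exact_mod_cast congrArg (Nat.cast (R := ℚ)) hkey
  have hp1 : (2:ℚ) ^ (N - (k - 1)) = 2 ^ (N - 2 * k) * (4 * 2 ^ (k - 1)) := by
    rw [show (4:ℚ) * 2 ^ (k - 1) = 2 ^ (k + 1) by
      rw [show k + 1 = (k - 1) + 2 by omega, pow_add]; ring]
    rw [← pow_add]
    congr 1
    omega
  have hp2 : (2:ℚ) ^ (N / 2 + 1) = 2 ^ (N / 2 - k) * (4 * 2 ^ (k - 1)) := by
    rw [show (4:ℚ) * 2 ^ (k - 1) = 2 ^ (k + 1) by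
      rw [show k + 1 = (k - 1) + 2 by omega, pow_add]; ring]
    rw [← pow_add]
    congr 1
    omega
  rw [hsplitQ, hp1, hp2] at hkeyQ
  have hne : (4:ℚ) * 2 ^ (k - 1) ≠ 0 := by positivity
  apply mul_right_cancel₀ hne
  linear_combination hkeyQ

lemma R2Q (hmod : N % 8 = 4) {k : ℕ} (hk1 : 1 ≤ k) (hk2 : k ≤ N / 2) :
    ((Bfin (N := N) k).card : ℚ) * (2 ^ k - 1)
      = ((Bfin (N := N) (k - 1)).card : ℚ) * (2 ^ (N - 2 * k) - 2 ^ (N / 2 - k) - 2) := by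
  have h := R2nat (N := N) hmod hk1
  have hc1 : ((Bfin (N := N) k).card : ℚ) * (2 ^ k - 1)
      = (((Bfin (N := N) k).card * (2 ^ k - 1) : ℕ) : ℚ) := by
    push_cast [Nat.cast_sub (Nat.one_le_two_pow)]
    ring
  rw [hc1, h, Nat.cast_sum]
  have hterm : ∀ W ∈ Bfin (N := N) (k - 1),
      (((Ext W k).card - 1 : ℕ) : ℚ) = 2 ^ (N - 2 * k) - 2 ^ (N / 2 - k) - 2 := by
    intro W hW
    rw [Nat.cast_sub (Ext_nonempty hmod hk1 hW), ExtCardQ hmod hk1 hk2 hW]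
    ring
  rw [Finset.sum_congr rfl hterm, Finset.sum_const, nsmul_eq_mul]

lemma Bfin_zero (hN : 1 ≤ N) : Bfin (N := N) 0 = {⊥} := by
  ext C
  rw [mem_Bfin, Finset.mem_singleton]
  constructor
  · rintro ⟨h0, -, -⟩
    exact Submodule.finrank_eq_zero.mp h0
  · rintro rfl
    refine ⟨finrank_bot _ _, fun v hv => ?_, fun h => ?_⟩
    · rw [Submodule.mem_bot] at hv
      rw [hv, hammingNorm_zero]
      exact dvd_zero 4
    · exact allOnes_ne_zero hN (Submodule.mem_bot _ |>.mp h)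

lemma one_lt_two_pow_q (j : ℕ) (hj : 1 ≤ j) : (1:ℚ) < 2 ^ j := by
  calc (1:ℚ) < 2 := by norm_num
  _ = 2 ^ 1 := (pow_one 2).symm
  _ ≤ 2 ^ j := by
    apply pow_le_pow_right₀ (by norm_num) hj

lemma Bclosed (hmod : N % 8 = 4) :
    ∀ k, k ≤ N / 2 → ((Bfin (N := N) k).card : ℚ)
      = ∏ i ∈ Finset.range k,
          ((2:ℚ) ^ (N - 2 * i - 2) - 2 ^ (N / 2 - i - 1) - 2) / (2 ^ (i + 1) - 1) := by
  intro k
  induction k with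
  | zero =>
    intro _
    rw [Bfin_zero (by omega)]
    simp
  | succ k ih =>
    intro hk
    have hk' : k ≤ N / 2 := by omega
    have hr := R2Q (N := N) hmod (k := k + 1) (by omega) hk
    rw [show k + 1 - 1 = k by omega,
      show N - 2 * (k + 1) = N - 2 * k - 2 by omega,
      show N / 2 - (k + 1) = N / 2 - k - 1 by omega] at hr
    have hden : ((2:ℚ) ^ (k + 1) - 1) ≠ 0 := by
      have := one_lt_two_pow_q (k + 1) (by omega)
      intro h
      rw [sub_eq_zero] at h
      rw [← h] at this
      exact lt_irrefl _ this
    rw [Finset.prod_range_succ, ← ih hk', mul_div_assoc', eq_div_iff hden]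
    linear_combination hr


theorem mainThm (N k : ℕ) (hN : 4 ≤ N) (hmod : N % 8 = 4)
    (hk1 : 1 ≤ k) (hk2 : k ≤ N / 2) :
    (doublyEvenCount N k : ℚ) =
      (∏ i ∈ Finset.range (k - 1),
        ((2 : ℚ) ^ (N - 2 * i - 2) - 2 ^ (N / 2 - i - 1) - 2) / (2 ^ (i + 1) - 1)) *
      (1 / 2 ^ (k - 1) + ((2 : ℚ) ^ (N - 2 * k) - 2 ^ (N / 2 - k) - 2) / (2 ^ k - 1)) := by

  have hTcard : doublyEvenCount N k
      = (Afin (N := N) k).card + (Bfin (N := N) k).card := by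
    rw [doublyEvenCount, Nat.card_eq_fintype_card, Fintype.card_subtype]
    have hsplit := Finset.card_filter_add_card_filter_not
      (s := univ.filter (fun C : Submodule (ZMod 2) (Fin N → ZMod 2) =>
        Module.finrank (ZMod 2) C = k ∧ ∀ v ∈ C, 4 ∣ hammingNorm v))
      (p := fun C => allOnes N ∈ C)
    rw [Finset.filter_filter, Finset.filter_filter] at hsplit
    have hAeq : (univ.filter (fun C : Submodule (ZMod 2) (Fin N → ZMod 2) =>
        (Module.finrank (ZMod 2) C = k ∧ ∀ v ∈ C, 4 ∣ hammingNorm v) ∧ allOnes N ∈ C))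
        = Afin (N := N) k := by
      apply Finset.filter_congr
      intro C _
      simp only [Afin, DE]
      tauto
    have hBeq : (univ.filter (fun C : Submodule (ZMod 2) (Fin N → ZMod 2) =>
        (Module.finrank (ZMod 2) C = k ∧ ∀ v ∈ C, 4 ∣ hammingNorm v) ∧ ¬ allOnes N ∈ C))
        = Bfin (N := N) k := by
      apply Finset.filter_congr
      intro C _
      simp only [Bfin, DE]
      tauto
    rw [hAeq, hBeq] at hsplit
    omega
  have hk1' : k - 1 ≤ N / 2 := by omega
  have hBk1 := Bclosed (N := N) hmod (k - 1) hk1'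
  have hA := R1nat (N := N) hmod hk1
  have hBQ := R2Q (N := N) hmod hk1 hk2
  have hf : ((2:ℚ)) ^ (k - 1) ≠ 0 := by positivity
  have hg : ((2:ℚ)) ^ k - 1 ≠ 0 := by
    have := one_lt_two_pow_q k hk1
    intro h
    rw [sub_eq_zero] at h
    rw [← h] at this
    exact lt_irrefl _ this
  have hAv : ((Afin (N := N) k).card : ℚ) = ((Bfin (N := N) (k - 1)).card : ℚ) / 2 ^ (k - 1) := by
    rw [eq_div_iff hf]
    exact_mod_cast hA.symm
  have hBv : ((Bfin (N := N) k).card : ℚ)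
      = ((Bfin (N := N) (k - 1)).card : ℚ)
          * (2 ^ (N - 2 * k) - 2 ^ (N / 2 - k) - 2) / (2 ^ k - 1) := by
    rw [eq_div_iff hg]
    exact hBQ
  have hPd : (∏ x ∈ Finset.range (k - 1), ((2:ℚ) ^ (x + 1) - 1)) ≠ 0 := by
    rw [Finset.prod_ne_zero_iff]
    intro i _
    have := one_lt_two_pow_q (i + 1) (by omega)
    intro h
    rw [sub_eq_zero] at h
    rw [← h] at this
    exact lt_irrefl _ this
  rw [hTcard]
  push_cast
  rw [hAv, hBv, hBk1, Finset.prod_div_distrib]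
  field_simp

end Gaborit

/-- Gaborit's mass formula for the number of doubly-even `(N,k)` codes when
`N ≡ 4 (mod 8)`, `N ≥ 4`, and `1 ≤ k ≤ N/2`; the empty product (for `k = 1`)
equals `1`. -/
theorem gaborit_count_four_mod_eight (N k : ℕ) (hN : 4 ≤ N) (hmod : N % 8 = 4)
    (hk1 : 1 ≤ k) (hk2 : k ≤ N / 2) :
    (doublyEvenCount N k : ℚ) =
      (∏ i ∈ Finset.range (k - 1),
        ((2 : ℚ) ^ (N - 2 * i - 2) - 2 ^ (N / 2 - i - 1) - 2) / (2 ^ (i + 1) - 1)) *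
      (1 / 2 ^ (k - 1) + ((2 : ℚ) ^ (N - 2 * k) - 2 ^ (N / 2 - k) - 2) / (2 ^ k - 1)) :=
  Gaborit.mainThm N k hN hmod hk1 hk2
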